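/- Let c₁, c₄, c₆ ∈ ℝ and let c = ((c₁, c₄·i), (c₆·i, 0)) ∈ 𝕄(3) (i.e. c = c₁·1 + c₄·j₁ + c₆·j₂, where j₁ = ((0,i),(0,0)) and j₂ = ((0,0),(i,0))). Then the sequence (Q_{3,c}^m(0))_{m≥1} is bounded in ‖·‖₃ if and only if both hyperbolic numbers (c₁, c₄ − c₆) and (c₁, c₄ + c₆) belong to the Hyperbric H³. (This expresses the Perplexbric P³ as the union over y of the sets [(H³ − y·j₁) ∩ (H³ + y·j₁)] + y·j₂.) -/

import Mathlib

/-- Bicomplex multiplication on ℂ × ℂ. -/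
def bcMul (z w : ℂ × ℂ) : ℂ × ℂ := (z.1 * w.1 - z.2 * w.2, z.1 * w.2 + z.2 * w.1)

/-- The bicomplex norm ‖(z₁,z₂)‖₂ = √(|z₁|² + |z₂|²). -/
noncomputable def bcNorm (z : ℂ × ℂ) : ℝ :=
  Real.sqrt (‖z.1‖ ^ 2 + ‖z.2‖ ^ 2)

/-- Tricomplex multiplication on 𝕄(2) × 𝕄(2). -/
def tcMul (z w : (ℂ × ℂ) × (ℂ × ℂ)) : (ℂ × ℂ) × (ℂ × ℂ) :=
  (bcMul z.1 w.1 - bcMul z.2 w.2, bcMul z.1 w.2 + bcMul z.2 w.1)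

/-- The tricomplex norm ‖(ζ₁,ζ₂)‖₃ = √(‖ζ₁‖₂² + ‖ζ₂‖₂²). -/
noncomputable def tcNorm (z : (ℂ × ℂ) × (ℂ × ℂ)) : ℝ :=
  Real.sqrt (bcNorm z.1 ^ 2 + bcNorm z.2 ^ 2)

/-- The tricomplex cubic polynomial Q_{3,c}(η) = η³ + c. -/
def tcQ3 (c : (ℂ × ℂ) × (ℂ × ℂ)) (z : (ℂ × ℂ) × (ℂ × ℂ)) :
    (ℂ × ℂ) × (ℂ × ℂ) := tcMul (tcMul z z) z + c

/-- Hyperbolic (duplex) multiplication on ℝ². -/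
def hMul (u v : ℝ × ℝ) : ℝ × ℝ := (u.1 * v.1 + u.2 * v.2, u.2 * v.1 + u.1 * v.2)

/-- The hyperbolic cubic polynomial H_{3,c}(w) = w⋄w⋄w + c. -/
def hQ3 (c : ℝ × ℝ) (w : ℝ × ℝ) : ℝ × ℝ := hMul (hMul w w) w + c

/-- The Hyperbric H³. -/
def Hyperbric : Set (ℝ × ℝ) :=
  {c | ∃ M : ℝ, ∀ m : ℕ, 1 ≤ m → ‖(hQ3 c)^[m] (0, 0)‖ ≤ M}

noncomputable def EE (u v : ℝ × ℝ) : (ℂ × ℂ) × (ℂ × ℂ) :=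
  (((((u.1 + v.1)/2 : ℝ) : ℂ), (((u.2 + v.2)/2 : ℝ) : ℂ) * Complex.I),
   ((((v.2 - u.2)/2 : ℝ) : ℂ) * Complex.I, (((u.1 - v.1)/2 : ℝ) : ℂ)))

lemma EE_mul (u v u' v' : ℝ × ℝ) :
    tcMul (EE u v) (EE u' v') = EE (hMul u u') (hMul v v') := by
  simp only [tcMul, bcMul, EE, hMul, Prod.mk.injEq, Prod.mk_sub_mk, Prod.mk_add_mk]
  constructor <;> constructor <;>
    · simp [Complex.ext_iff] <;> push_cast <;> ring_nf <;> simp <;> ring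

lemma EE_add (u v u' v' : ℝ × ℝ) :
    EE u v + EE u' v' = EE (u + u') (v + v') := by
  simp only [EE, Prod.mk_add_mk, Prod.fst_add, Prod.snd_add, Prod.mk.injEq]
  constructor <;> constructor <;> · push_cast; ring

lemma tcQ3_EE (a b u v : ℝ × ℝ) :
    tcQ3 (EE a b) (EE u v) = EE (hQ3 a u) (hQ3 b v) := by
  rw [tcQ3, EE_mul, EE_mul, EE_add, hQ3, hQ3]

lemma EE_iter (a b : ℝ × ℝ) (m : ℕ) :
    (tcQ3 (EE a b))^[m] (EE 0 0) = EE ((hQ3 a)^[m] 0) ((hQ3 b)^[m] 0) := by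
  induction m with
  | zero => simp
  | succ n ih => rw [Function.iterate_succ_apply', ih, tcQ3_EE,
      Function.iterate_succ_apply', Function.iterate_succ_apply']

lemma tcNorm_EE (u v : ℝ × ℝ) :
    tcNorm (EE u v) = Real.sqrt ((u.1^2 + u.2^2 + v.1^2 + v.2^2)/2) := by
  simp only [tcNorm, bcNorm, EE]
  rw [norm_mul, norm_mul]
  simp only [Complex.norm_real, Real.norm_eq_abs, Complex.norm_I, mul_one]
  rw [Real.sq_sqrt (by positivity), Real.sq_sqrt (by positivity)]
  congr 1
  rw [sq_abs, sq_abs, sq_abs, sq_abs]; ring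

lemma norm_le_sqrt2_tcNorm (u v : ℝ × ℝ) : ‖u‖ ≤ Real.sqrt 2 * tcNorm (EE u v) := by
  rw [tcNorm_EE, ← Real.sqrt_mul (by norm_num : (0:ℝ) ≤ 2)]
  have h1 : |u.1| ≤ Real.sqrt (2 * ((u.1^2 + u.2^2 + v.1^2 + v.2^2)/2)) := by
    rw [← Real.sqrt_sq_eq_abs]
    exact Real.sqrt_le_sqrt (by nlinarith [sq_nonneg u.2, sq_nonneg v.1, sq_nonneg v.2])
  have h2 : |u.2| ≤ Real.sqrt (2 * ((u.1^2 + u.2^2 + v.1^2 + v.2^2)/2)) := by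
    rw [← Real.sqrt_sq_eq_abs]
    exact Real.sqrt_le_sqrt (by nlinarith [sq_nonneg u.1, sq_nonneg v.1, sq_nonneg v.2])
  rw [Prod.norm_def]
  simpa [Real.norm_eq_abs] using max_le h1 h2

lemma tcNorm_EE_le (u v : ℝ × ℝ) : tcNorm (EE u v) ≤ ‖u‖ + ‖v‖ := by
  rw [tcNorm_EE]
  have hu1 : |u.1| ≤ ‖u‖ := le_max_left _ _
  have hu2 : |u.2| ≤ ‖u‖ := le_max_right _ _
  have hv1 : |v.1| ≤ ‖v‖ := le_max_left _ _
  have hv2 : |v.2| ≤ ‖v‖ := le_max_right _ _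
  have hnu : (0:ℝ) ≤ ‖u‖ := norm_nonneg u
  have hnv : (0:ℝ) ≤ ‖v‖ := norm_nonneg v
  rw [show (‖u‖ + ‖v‖) = Real.sqrt ((‖u‖ + ‖v‖)^2) from (Real.sqrt_sq (by positivity)).symm]
  apply Real.sqrt_le_sqrt
  nlinarith [abs_nonneg u.1, abs_nonneg u.2, abs_nonneg v.1, abs_nonneg v.2,
    sq_abs u.1, sq_abs u.2, sq_abs v.1, sq_abs v.2]

theorem perplexbric_characterization (c₁ c₄ c₆ : ℝ) :
    (∃ M : ℝ, ∀ m : ℕ, 1 ≤ m →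
        tcNorm ((tcQ3 (((c₁ : ℂ), (c₄ : ℂ) * Complex.I),
          ((c₆ : ℂ) * Complex.I, 0)))^[m] ((0, 0), (0, 0))) ≤ M) ↔
      (c₁, c₄ - c₆) ∈ Hyperbric ∧ (c₁, c₄ + c₆) ∈ Hyperbric := by
  have hc : (((c₁ : ℂ), (c₄ : ℂ) * Complex.I), ((c₆ : ℂ) * Complex.I, 0))
      = EE (c₁, c₄ - c₆) (c₁, c₄ + c₆) := by
    simp only [EE, Prod.mk.injEq]
    refine ⟨⟨?_, ?_⟩, ?_, ?_⟩ <;> · push_cast; ring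
  have h0 : ((0,0),(0,0)) = EE (0,0) (0,0) := by simp [EE]
  have key : ∀ m : ℕ, (tcQ3 (((c₁ : ℂ), (c₄ : ℂ) * Complex.I),
        ((c₆ : ℂ) * Complex.I, 0)))^[m] ((0, 0), (0, 0))
      = EE ((hQ3 (c₁, c₄ - c₆))^[m] (0,0)) ((hQ3 (c₁, c₄ + c₆))^[m] (0,0)) := by
    intro m
    rw [hc, h0]
    exact EE_iter _ _ m
  constructor
  · rintro ⟨M, hM⟩
    refine ⟨⟨Real.sqrt 2 * M, fun m hm => ?_⟩, ⟨Real.sqrt 2 * M, fun m hm => ?_⟩⟩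
    · calc ‖(hQ3 (c₁, c₄ - c₆))^[m] (0,0)‖
          ≤ Real.sqrt 2 * tcNorm (EE ((hQ3 (c₁, c₄ - c₆))^[m] (0,0))
              ((hQ3 (c₁, c₄ + c₆))^[m] (0,0))) := norm_le_sqrt2_tcNorm _ _
        _ ≤ Real.sqrt 2 * M := by
            have := hM m hm
            rw [key m] at this
            exact mul_le_mul_of_nonneg_left this (Real.sqrt_nonneg 2)
    · have hle : ‖(hQ3 (c₁, c₄ + c₆))^[m] (0,0)‖
          ≤ Real.sqrt 2 * tcNorm (EE ((hQ3 (c₁, c₄ - c₆))^[m] (0,0))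
              ((hQ3 (c₁, c₄ + c₆))^[m] (0,0))) := by
        have h := norm_le_sqrt2_tcNorm ((hQ3 (c₁, c₄ + c₆))^[m] (0,0))
          ((hQ3 (c₁, c₄ - c₆))^[m] (0,0))
        have hsym : tcNorm (EE ((hQ3 (c₁, c₄ + c₆))^[m] (0,0)) ((hQ3 (c₁, c₄ - c₆))^[m] (0,0)))
            = tcNorm (EE ((hQ3 (c₁, c₄ - c₆))^[m] (0,0)) ((hQ3 (c₁, c₄ + c₆))^[m] (0,0))) := by
          rw [tcNorm_EE, tcNorm_EE]; ring_nf
        rwa [hsym] at h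
      have := hM m hm
      rw [key m] at this
      exact hle.trans (mul_le_mul_of_nonneg_left this (Real.sqrt_nonneg 2))
  · rintro ⟨⟨M₁, hM₁⟩, ⟨M₂, hM₂⟩⟩
    refine ⟨M₁ + M₂, fun m hm => ?_⟩
    rw [key m]
    exact (tcNorm_EE_le _ _).trans (add_le_add (hM₁ m hm) (hM₂ m hm))
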